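/- For Model 1 in dimension d = 1 under the Cramér condition: there exists c'' > 0 so that for c₁ sufficiently small and n, l sufficiently large, for any block index k one has P(A(c₁,n,l,k)) ≤ e^{−c''ε(1−δ)n}, where A(c₁,n,l,k) = {∃ J ⊆ {1,2,…,(1−δ)n/l} with |J| ≤ c₁n/l and Σ_{j∈J} Y_{k,j} ≤ −(ε/10)(1−δ)n}. -/

import Mathlib

/-!
Model 1 (directed last passage percolation, d = 1).  Edges are indexed by
`(x, m, b) : ℤ × ℕ × Bool`, representing the directed edge from the vertex
`(x, m)` to `(x + (if b then 1 else -1), m + 1)`.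
-/

open MeasureTheory ProbabilityTheory Filter

namespace Stmt8

/-- Position of a directed path after `k` steps, starting at `x`,
with step signs `s`. -/
def pos (x : ℤ) (s : ℕ → Bool) : ℕ → ℤ
  | 0 => x
  | k + 1 => pos x s k + (if s k then 1 else -1)

/-- Value `V(γ)` of the directed path starting at `(x, m)`, taking `n` steps
according to `s`, in the edge-weight realization `Y`. -/
noncomputable def pathVal (Y : ℤ × ℕ × Bool → ℝ) (x : ℤ) (m : ℕ) (s : ℕ → Bool) (n : ℕ) : ℝ :=
  ∑ k ∈ Finset.range n, Y (pos x s k, m + k, s k)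

/-- The `k`-th spatial block `C_k ⊂ ℤ`: an interval of length `l` inside
`(-δn/4, δn/4)`, the blocks `C_1, C_2, …` being disjoint and consecutive. -/
noncomputable def Cblock (δ : ℝ) (n l k : ℕ) : Set ℤ :=
  Set.Ico (-⌊δ * (n : ℝ) / 4⌋ + ((k : ℤ) - 1) * l) (-⌊δ * (n : ℝ) / 4⌋ + (k : ℤ) * l)

/-- The level of the bottom of block `R_{k,j}`, namely `δn + (j-1)l`. -/
noncomputable def blockLevel (δ : ℝ) (n l j : ℕ) : ℕ := ⌊δ * (n : ℝ)⌋₊ + (j - 1) * l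

/-- `Y_{k,j} = min_{x ∈ Ξ_{δn+(j-1)l}(C_k)} max_{γ ∈ ℵ_{δn+jl}^x(C_k)} V(γ)`:
the minimum over points `x` of `Ξ_{δn+(j-1)l}(C_k)` of the maximal value of a
directed path from `x` to level `δn + jl` confined spatially to `C_k`. -/
noncomputable def Ykj (Y : ℤ × ℕ × Bool → ℝ) (δ : ℝ) (n l k j : ℕ) : ℝ :=
  ⨅ x : {x : ℤ // x ∈ Cblock δ n l k ∧ (x + (blockLevel δ n l j : ℤ)) % 2 = 0},
    ⨆ s : {s : ℕ → Bool // ∀ i ≤ l, pos x.1 s i ∈ Cblock δ n l k},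
      pathVal Y x.1 (blockLevel δ n l j) s.1 l

/-- The event `A(c₁, n, l, k)`: there is a set `J ⊆ {1, …, (1-δ)n/l}` of
cardinality at most `c₁ n / l` with `Σ_{j ∈ J} Y_{k,j} ≤ -(ε/10)(1-δ)n`. -/
def Aevent (X : ℤ × ℕ × Bool → Ω → ℝ) (ε δ c₁ : ℝ) (n l k : ℕ) : Set Ω :=
  {ω | ∃ J : Finset ℕ, J ⊆ Finset.Icc 1 ⌊(1 - δ) * (n : ℝ) / l⌋₊ ∧
    (J.card : ℝ) ≤ c₁ * n / l ∧
    ∑ j ∈ J, Ykj (fun e => X e ω) δ n l k j ≤ -(ε / 10) * ((1 - δ) * n)}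

end Stmt8

open Stmt8

namespace Stmt8P
open Stmt8
noncomputable def lo (δ : ℝ) (n l k : ℕ) : ℤ := -⌊δ * (n : ℝ) / 4⌋ + ((k : ℤ) - 1) * l
lemma Cblock_eq (δ : ℝ) (n l k : ℕ) :
    Cblock δ n l k = Set.Ico (lo δ n l k) (lo δ n l k + l) := by
  unfold Cblock lo; ring_nf
def sUp : ℕ → Bool := fun i => i % 2 == 0
def sDn : ℕ → Bool := fun i => i % 2 == 1
lemma pos_sUp (x : ℤ) (k : ℕ) : pos x sUp k = x + ((k % 2 : ℕ) : ℤ) := by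
  induction k with
  | zero => simp [pos]
  | succ k ih =>
    rcases Nat.mod_two_eq_zero_or_one k with h | h <;>
      simp [pos, ih, sUp, h, Nat.succ_mod_two_eq_one_iff, Nat.succ_mod_two_eq_zero_iff] <;> omega
lemma pos_sDn (x : ℤ) (k : ℕ) : pos x sDn k = x - ((k % 2 : ℕ) : ℤ) := by
  induction k with
  | zero => simp [pos]
  | succ k ih =>
    rcases Nat.mod_two_eq_zero_or_one k with h | h <;>
      simp [pos, ih, sDn, h, Nat.succ_mod_two_eq_one_iff, Nat.succ_mod_two_eq_zero_iff] <;> omega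
noncomputable def sfun (δ : ℝ) (n l k : ℕ) (x : ℤ) : ℕ → Bool :=
  if x + 1 < lo δ n l k + l then sUp else sDn
lemma sfun_confined (δ : ℝ) (n l k : ℕ) (hl : 2 ≤ l) {x : ℤ}
    (hx : x ∈ Set.Ico (lo δ n l k) (lo δ n l k + l)) :
    ∀ i, pos x (sfun δ n l k x) i ∈ Cblock δ n l k := by
  intro i
  rw [Cblock_eq]
  obtain ⟨h1, h2⟩ := hx
  unfold sfun
  split_ifs with h
  · rw [pos_sUp]
    rcases Nat.mod_two_eq_zero_or_one i with hi | hi <;> simp [hi, Set.mem_Ico] <;> omega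
  · rw [pos_sDn]
    rcases Nat.mod_two_eq_zero_or_one i with hi | hi <;> simp [hi, Set.mem_Ico]
    · omega
    · constructor <;> [omega; omega]

lemma pos_congr (x : ℤ) {s s' : ℕ → Bool} {l : ℕ} (h : ∀ i < l, s i = s' i) :
    ∀ k ≤ l, pos x s k = pos x s' k := by
  intro k hk
  induction k with
  | zero => rfl
  | succ k ih =>
    simp only [pos, ih (Nat.le_of_succ_le hk), h k (Nat.lt_of_succ_le hk)]

lemma pathVal_congr (Y : ℤ × ℕ × Bool → ℝ) (x : ℤ) (m : ℕ) {s s' : ℕ → Bool} {l : ℕ}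
    (h : ∀ i < l, s i = s' i) : pathVal Y x m s l = pathVal Y x m s' l := by
  unfold pathVal
  refine Finset.sum_congr rfl fun i hi => ?_
  rw [Finset.mem_range] at hi
  rw [pos_congr x h i hi.le, h i hi]

/-- The finite set of admissible starting points. -/
noncomputable def Fx (δ : ℝ) (n l k j : ℕ) : Finset ℤ :=
  (Finset.Ico (lo δ n l k) (lo δ n l k + l)).filter
    (fun x => (x + (blockLevel δ n l j : ℤ)) % 2 = 0)

lemma Fx_card_le (δ : ℝ) (n l k j : ℕ) : (Fx δ n l k j).card ≤ l := by
  calc (Fx δ n l k j).card ≤ (Finset.Ico (lo δ n l k) (lo δ n l k + l)).card :=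
        Finset.card_filter_le _ _
    _ = l := by rw [Int.card_Ico]; simp

lemma bddAbove_paths (Y : ℤ × ℕ × Bool → ℝ) (δ : ℝ) (n l k : ℕ) (x : ℤ) (m : ℕ) :
    BddAbove (Set.range (fun s : {s : ℕ → Bool // ∀ i ≤ l, pos x s i ∈ Cblock δ n l k} =>
      pathVal Y x m s.1 l)) := by
  classical
  apply Set.Finite.bddAbove
  apply Set.Finite.subset (Set.finite_range
    (fun v : Fin l → Bool => pathVal Y x m (fun i => if h : i < l then v ⟨i, h⟩ else false) l))
  rintro r ⟨s, rfl⟩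
  refine ⟨fun i => s.1 i.1, ?_⟩
  apply pathVal_congr
  intro i hi
  simp [hi]

lemma Ykj_ge (Y : ℤ × ℕ × Bool → ℝ) (δ : ℝ) (n l k j : ℕ) (hl : 2 ≤ l) :
    ∃ x ∈ Fx δ n l k j,
      pathVal Y x (blockLevel δ n l j) (sfun δ n l k x) l ≤ Ykj Y δ n l k j := by
  classical
  set L := blockLevel δ n l j
  -- Fx is nonempty
  have hne : (Fx δ n l k j).Nonempty := by
    rcases Int.emod_two_eq (lo δ n l k + (L : ℤ)) with h | h
    · exact ⟨lo δ n l k, by simp only [Fx, Finset.mem_filter, Finset.mem_Ico]; omega⟩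
    · exact ⟨lo δ n l k + 1, by simp only [Fx, Finset.mem_filter, Finset.mem_Ico]; omega⟩
  set c := (Fx δ n l k j).inf' hne
    (fun x => pathVal Y x L (sfun δ n l k x) l) with hc
  have hsub : Nonempty {x : ℤ // x ∈ Cblock δ n l k ∧ (x + (L : ℤ)) % 2 = 0} := by
    obtain ⟨x, hx⟩ := hne
    simp only [Fx, Finset.mem_filter, Finset.mem_Ico] at hx
    exact ⟨⟨x, by rw [Cblock_eq, Set.mem_Ico]; exact hx.1, hx.2⟩⟩
  have hcY : c ≤ Ykj Y δ n l k j := by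
    refine le_ciInf fun x => ?_
    obtain ⟨x, hxC, hxp⟩ := x
    have hxIco : x ∈ Set.Ico (lo δ n l k) (lo δ n l k + l) := Cblock_eq δ n l k ▸ hxC
    have hxmem : x ∈ Fx δ n l k j := by
      simp only [Fx, Finset.mem_filter, Finset.mem_Ico]
      exact ⟨Set.mem_Ico.mp hxIco, hxp⟩
    refine le_trans (Finset.inf'_le _ hxmem) ?_
    exact le_ciSup_of_le (bddAbove_paths Y δ n l k x L)
      ⟨sfun δ n l k x, fun i _ => sfun_confined δ n l k hl hxIco i⟩ le_rfl
  obtain ⟨x, hx, hxeq⟩ := (Fx δ n l k j).exists_mem_eq_inf' hne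
    (fun x => pathVal Y x L (sfun δ n l k x) l)
  have h2 : ((Fx δ n l k j).inf' hne (fun x => pathVal Y x L (sfun δ n l k x) l))
      ≤ Ykj Y δ n l k j := hcY
  rw [hxeq] at h2
  exact ⟨x, hx, h2⟩
open Real

variable {Ω : Type} [MeasurableSpace Ω] {P : Measure Ω} [IsProbabilityMeasure P]

lemma integral_prod_eq {ι : Type*} {f : ι → Ω → ℝ}
    (hindep : iIndepFun f P)
    (hmeas : ∀ i, Measurable (f i)) (hint : ∀ i, Integrable (f i) P) (s : Finset ι) :
    Integrable (fun ω => ∏ i ∈ s, f i ω) P ∧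
      ∫ ω, ∏ i ∈ s, f i ω ∂P = ∏ i ∈ s, ∫ ω, f i ω ∂P := by
  classical
  induction s using Finset.induction with
  | empty => simp
  | @insert a s ha ih =>
    have hif : IndepFun (f a) (∏ j ∈ s, f j) P :=
      (hindep.indepFun_finsetProd_of_notMem hmeas ha).symm
    have hps : (∏ j ∈ s, f j) = fun ω => ∏ i ∈ s, f i ω := by
      funext ω; simp
    rw [hps] at hif
    have hint' : Integrable (fun ω => f a ω * ∏ i ∈ s, f i ω) P :=
      hif.integrable_mul (hint a) ih.1
    constructor
    · simpa [Finset.prod_insert ha] using hint'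
    · have := hif.integral_fun_mul_eq_mul_integral (hint a).aestronglyMeasurable ih.1.aestronglyMeasurable
      simp only [Finset.prod_insert ha]
      calc ∫ ω, f a ω * ∏ i ∈ s, f i ω ∂P
          = (∫ ω, f a ω ∂P) * ∫ ω, ∏ i ∈ s, f i ω ∂P := this
        _ = _ := by rw [ih.2]

lemma Xint' (X : Ω → ℝ) (hm : Measurable X) (c₀ : ℝ) (hc₀ : 0 < c₀)
    (h1 : Integrable (fun ω => Real.exp ((c₀/2) * X ω)) P)
    (h2 : Integrable (fun ω => Real.exp (-(c₀/2) * X ω)) P) :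
    Integrable X P := by
  have h := (h1.add h2).const_mul (2/c₀)
  refine h.mono hm.aestronglyMeasurable ?_
  filter_upwards with ω
  have hu : |(c₀/2) * X ω| ≤ Real.exp ((c₀/2) * X ω) + Real.exp (-(c₀/2) * X ω) := by
    rcases abs_cases ((c₀/2) * X ω) with ⟨he, _⟩ | ⟨he, _⟩
    · rw [he]
      have := Real.add_one_le_exp ((c₀/2) * X ω)
      have := Real.exp_pos (-(c₀/2) * X ω)
      linarith
    · rw [he]
      have := Real.add_one_le_exp (-((c₀/2) * X ω))
      have := Real.exp_pos ((c₀/2) * X ω)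
      have : Real.exp (-((c₀/2) * X ω)) = Real.exp (-(c₀/2) * X ω) := by ring_nf
      linarith [Real.add_one_le_exp (-((c₀/2) * X ω)), Real.exp_pos ((c₀/2) * X ω),
        this ▸ Real.add_one_le_exp (-((c₀/2) * X ω))]
  have habs : |X ω| ≤ (2/c₀) * (Real.exp ((c₀/2) * X ω) + Real.exp (-(c₀/2) * X ω)) := by
    have h3 : |(c₀/2) * X ω| = (c₀/2) * |X ω| := by
      rw [abs_mul, abs_of_pos (by linarith : (0:ℝ) < c₀/2)]
    rw [h3] at hu
    calc |X ω| = (2/c₀) * ((c₀/2) * |X ω|) := by field_simp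
      _ ≤ (2/c₀) * (Real.exp ((c₀/2) * X ω) + Real.exp (-(c₀/2) * X ω)) := by
          apply mul_le_mul_of_nonneg_left hu; positivity
  have hb : (0:ℝ) ≤ Real.exp ((c₀/2) * X ω) + Real.exp (-(c₀/2) * X ω) := by positivity
  rw [Real.norm_eq_abs, Real.norm_eq_abs]
  rw [abs_of_nonneg (by positivity : (0:ℝ) ≤ 2 / c₀ * ((fun ω => rexp (c₀ / 2 * X ω)) + fun ω => rexp (-(c₀ / 2) * X ω)) ω)]
  simpa using habs

lemma M_ge_one (X : Ω → ℝ) (t : ℝ) (hXi : Integrable X P) (hmean : ∫ ω, X ω ∂P = 0)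
    (hint : Integrable (fun ω => Real.exp (-t * X ω)) P) :
    1 ≤ ∫ ω, Real.exp (-t * X ω) ∂P := by
  have h1 : ∫ ω, (1 + (-t) * X ω) ∂P ≤ ∫ ω, Real.exp (-t * X ω) ∂P := by
    apply integral_mono ((integrable_const (1:ℝ)).add (hXi.const_mul (-t))) hint
    intro ω
    have := Real.add_one_le_exp ((-t) * X ω)
    simp only [Pi.add_apply, neg_mul] at *
    linarith
  have h2 : ∫ ω, (1 + (-t) * X ω) ∂P = 1 := by
    rw [integral_add (integrable_const _) (hXi.const_mul (-t)), integral_const,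
      integral_const_mul, hmean]
    simp
  linarith [h1, h2.symm.le]

lemma integral_exp_eq (X Y : Ω → ℝ) (hX : Measurable X) (hY : Measurable Y)
    (hid : Measure.map X P = Measure.map Y P) (t : ℝ) :
    ∫ ω, Real.exp (-t * X ω) ∂P = ∫ ω, Real.exp (-t * Y ω) ∂P := by
  have hm : Measurable (fun y : ℝ => Real.exp (-t * y)) := by fun_prop
  rw [← integral_map hX.aemeasurable hm.aestronglyMeasurable, hid,
    integral_map hY.aemeasurable hm.aestronglyMeasurable]

lemma level_inj' {a b u v l : ℕ} (hu : u < l) (hv : v < l)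
    (h : a * l + u = b * l + v) : a = b ∧ u = v := by
  have hl0 : 0 < l := Nat.pos_of_ne_zero (by omega)
  have ha : a = (a * l + u) / l := by
    rw [mul_comm, Nat.mul_add_div hl0, Nat.div_eq_of_lt hu]; omega
  have hb : b = (b * l + v) / l := by
    rw [mul_comm, Nat.mul_add_div hl0, Nat.div_eq_of_lt hv]; omega
  have hab : a = b := by rw [ha, hb, h]
  subst hab
  exact ⟨rfl, by omega⟩

lemma level_inj {j j' i i' l : ℕ} (hi : i < l) (hi' : i' < l)
    (h : (j - 1) * l + i = (j' - 1) * l + i') : j - 1 = j' - 1 ∧ i = i' :=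
  level_inj' hi hi' h

lemma chernoff_block (X : ℤ × ℕ × Bool → Ω → ℝ) (hmeas : ∀ e, Measurable (X e))
    (hindep : iIndepFun X P)
    (t M : ℝ) (ht : 0 < t) (hM1 : 1 ≤ M)
    (hint : ∀ e, Integrable (fun ω => Real.exp (-t * X e ω)) P)
    (hMeq : ∀ e, ∫ ω, Real.exp (-t * X e ω) ∂P = M)
    (δ : ℝ) (n l k N : ℕ) (hl : 2 ≤ l) (J : Finset ℕ) (hJ : J ⊆ Finset.Icc 1 N)
    (a : ℝ) :
    (P {ω | ∑ j ∈ J, Ykj (fun e => X e ω) δ n l k j ≤ -a}).toReal ≤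
      Real.exp (-(t * a)) * ((l : ℝ) * M ^ l) ^ J.card := by
  classical
  set f : ℤ × ℕ × Bool → Ω → ℝ := fun e ω => Real.exp (-t * X e ω) with hf
  have hfiid : iIndepFun f P :=
    hindep.comp (fun _ (y : ℝ) => Real.exp (-t * y)) (fun _ => by fun_prop)
  have hfmeas : ∀ e, Measurable (f e) :=
    fun e => Real.measurable_exp.comp ((hmeas e).const_mul (-t))
  -- expansion of exp(-t * pathVal) as a product over edges
  have hexp_path : ∀ (x : ℤ) (j : ℕ) (ω : Ω),
      Real.exp (-t * pathVal (fun e => X e ω) x (blockLevel δ n l j) (sfun δ n l k x) l)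
        = ∏ i ∈ Finset.range l,
            f (pos x (sfun δ n l k x) i, blockLevel δ n l j + i, sfun δ n l k x i) ω := by
    intro x j ω
    unfold pathVal
    rw [Finset.mul_sum, Real.exp_sum]
  set G : Ω → ℝ := fun ω => ∏ j ∈ J, ∑ x ∈ Fx δ n l k j,
    Real.exp (-t * pathVal (fun e => X e ω) x (blockLevel δ n l j) (sfun δ n l k x) l)
    with hG
  have hGnn : ∀ ω, 0 ≤ G ω := by
    intro ω
    exact Finset.prod_nonneg fun j _ =>
      Finset.sum_nonneg fun x _ => (Real.exp_pos _).le
  -- the event is contained in {exp(t*a) ≤ G}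
  have hsubset : {ω | ∑ j ∈ J, Ykj (fun e => X e ω) δ n l k j ≤ -a}
      ⊆ {ω | Real.exp (t * a) ≤ G ω} := by
    intro ω hω
    simp only [Set.mem_setOf_eq] at hω ⊢
    have h1 : Real.exp (t * a) ≤ Real.exp (-t * ∑ j ∈ J, Ykj (fun e => X e ω) δ n l k j) := by
      apply Real.exp_le_exp.mpr
      nlinarith
    refine h1.trans ?_
    rw [Finset.mul_sum, Real.exp_sum]
    apply Finset.prod_le_prod (fun j _ => (Real.exp_pos _).le)
    intro j _
    obtain ⟨x, hx, hle⟩ := Ykj_ge (fun e => X e ω) δ n l k j hl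
    have h2 : Real.exp (-t * Ykj (fun e => X e ω) δ n l k j)
        ≤ Real.exp (-t * pathVal (fun e => X e ω) x (blockLevel δ n l j) (sfun δ n l k x) l) := by
      apply Real.exp_le_exp.mpr
      nlinarith
    exact h2.trans (Finset.single_le_sum
      (f := fun y => Real.exp (-t * pathVal (fun e => X e ω) y (blockLevel δ n l j)
        (sfun δ n l k y) l)) (fun y _ => (Real.exp_pos _).le) hx)
  -- expansion of G as a sum over choice functions
  set term : (∀ j ∈ J, ℤ) → Ω → ℝ := fun p ω => ∏ x ∈ J.attach,
    Real.exp (-t * pathVal (fun e => X e ω) (p x.1 x.2) (blockLevel δ n l x.1)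
      (sfun δ n l k (p x.1 x.2)) l) with hterm_def
  have hGsum : G = fun ω => ∑ p ∈ J.pi (fun j => Fx δ n l k j), term p ω := by
    funext ω
    exact Finset.prod_sum _ _ _
  -- each term integrates to M ^ (J.card * l)
  have hterm : ∀ p ∈ J.pi (fun j => Fx δ n l k j),
      Integrable (term p) P ∧ ∫ ω, term p ω ∂P = M ^ (J.card * l) := by
    intro p hp
    set E : {j // j ∈ J} × ℕ → ℤ × ℕ × Bool := fun q =>
      (pos (p q.1.1 q.1.2) (sfun δ n l k (p q.1.1 q.1.2)) q.2,
        blockLevel δ n l q.1.1 + q.2, sfun δ n l k (p q.1.1 q.1.2) q.2) with hE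
    have hinj : Set.InjOn E ↑(J.attach ×ˢ Finset.range l) := by
      rintro ⟨⟨j, hj⟩, i⟩ hq ⟨⟨j', hj'⟩, i'⟩ hq' heq
      simp only [Finset.mem_coe, Finset.mem_product, Finset.mem_attach, Finset.mem_range,
        true_and] at hq hq'
      have hj1 : 1 ≤ j := (Finset.mem_Icc.mp (hJ hj)).1
      have hj'1 : 1 ≤ j' := (Finset.mem_Icc.mp (hJ hj')).1
      have hlev : blockLevel δ n l j + i = blockLevel δ n l j' + i' := by
        have := congrArg (fun e => e.2.1) heq
        simpa [hE] using this
      unfold blockLevel at hlev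
      have h' : (j - 1) * l + i = (j' - 1) * l + i' := by omega
      have hji := level_inj hq hq' h'
      have hjj : j = j' := by omega
      have hii : i = i' := hji.2
      subst hjj; subst hii
      rfl
    have hterm_eq : term p = fun ω => ∏ e ∈ (J.attach ×ˢ Finset.range l).image E, f e ω := by
      funext ω
      rw [hterm_def]
      simp only
      rw [Finset.prod_image (fun q hq q' hq' => hinj (Finset.mem_coe.mpr hq) (Finset.mem_coe.mpr hq'))]
      rw [Finset.prod_product]
      refine Finset.prod_congr rfl fun x _ => ?_
      rw [hexp_path]
    have hcard : ((J.attach ×ˢ Finset.range l).image E).card = J.card * l := by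
      rw [Finset.card_image_of_injOn hinj, Finset.card_product, Finset.card_attach,
        Finset.card_range]
    obtain ⟨hi1, hi2⟩ := integral_prod_eq hfiid hfmeas (fun e => hint e)
      ((J.attach ×ˢ Finset.range l).image E)
    constructor
    · rw [hterm_eq]; exact hi1
    · rw [hterm_eq]
      rw [hi2]
      rw [Finset.prod_congr rfl (fun e _ => hMeq e), Finset.prod_const, hcard]
  -- G is integrable with a bounded integral
  have hGint : Integrable G P := by
    rw [hGsum]
    exact integrable_finset_sum _ (fun p hp => (hterm p hp).1)
  have hGval : ∫ ω, G ω ∂P ≤ ((l : ℝ) * M ^ l) ^ J.card := by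
    have hM0 : (0:ℝ) ≤ M := by linarith
    have h1 : ∫ ω, G ω ∂P = ∑ p ∈ J.pi (fun j => Fx δ n l k j), M ^ (J.card * l) := by
      rw [hGsum, integral_finset_sum _ (fun p hp => (hterm p hp).1)]
      exact Finset.sum_congr rfl fun p hp => (hterm p hp).2
    rw [h1, Finset.sum_const, nsmul_eq_mul]
    have hcardpi : ((J.pi (fun j => Fx δ n l k j)).card : ℝ) ≤ (l : ℝ) ^ J.card := by
      rw [Finset.card_pi]
      have : (∏ j ∈ J, (Fx δ n l k j).card) ≤ ∏ _j ∈ J, l :=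
        Finset.prod_le_prod' (fun j _ => Fx_card_le δ n l k j)
      calc ((∏ j ∈ J, (Fx δ n l k j).card : ℕ) : ℝ) ≤ ((∏ _j ∈ J, l : ℕ) : ℝ) := by
            exact_mod_cast this
        _ = (l : ℝ) ^ J.card := by rw [Finset.prod_const]; push_cast; ring
    calc ((J.pi (fun j => Fx δ n l k j)).card : ℝ) * M ^ (J.card * l)
        ≤ (l : ℝ) ^ J.card * M ^ (J.card * l) := by
          apply mul_le_mul_of_nonneg_right hcardpi (by positivity)
      _ = ((l : ℝ) * M ^ l) ^ J.card := by
          rw [mul_pow, ← pow_mul, mul_comm l J.card]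
  -- Markov
  have hmarkov := mul_meas_ge_le_integral_of_nonneg (ae_of_all P hGnn) hGint (Real.exp (t * a))
  have htr : (P {ω | ∑ j ∈ J, Ykj (fun e => X e ω) δ n l k j ≤ -a}).toReal
      ≤ (P {ω | Real.exp (t * a) ≤ G ω}).toReal :=
    ENNReal.toReal_mono (measure_ne_top _ _) (measure_mono hsubset)
  have hb : Real.exp (t * a) * (P {ω | ∑ j ∈ J, Ykj (fun e => X e ω) δ n l k j ≤ -a}).toReal
      ≤ ((l : ℝ) * M ^ l) ^ J.card := by
    calc Real.exp (t * a) * (P {ω | ∑ j ∈ J, Ykj (fun e => X e ω) δ n l k j ≤ -a}).toReal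
        ≤ Real.exp (t * a) * (P {ω | Real.exp (t * a) ≤ G ω}).toReal :=
          mul_le_mul_of_nonneg_left htr (Real.exp_pos _).le
      _ ≤ ∫ ω, G ω ∂P := hmarkov
      _ ≤ ((l : ℝ) * M ^ l) ^ J.card := hGval
  rw [Real.exp_neg, inv_mul_eq_div, le_div_iff₀ (Real.exp_pos _)]
  linarith [hb]
end Stmt8P

set_option maxHeartbeats 1000000 in
open Stmt8P in
/-- Lemma 2.3.  Under the Cramér condition, with `ε, δ ∈ (0,1)`
fixed, there exists `c'' > 0` such that for `c₁` sufficiently small and `n, l`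
sufficiently large, for any block index `k`,
`P(A(c₁,n,l,k)) ≤ e^{-c'' ε (1-δ) n}`. -/
theorem stmt_8
    {Ω : Type} [MeasurableSpace Ω] (P : Measure Ω) [IsProbabilityMeasure P]
    (X : ℤ × ℕ × Bool → Ω → ℝ)
    (hmeas : ∀ e, Measurable (X e))
    (hindep : iIndepFun X P)
    (hident : ∀ e e', Measure.map (X e) P = Measure.map (X e') P)
    (hmean : ∀ e, ∫ ω, X e ω ∂P = 0)
    (c₀ : ℝ) (hc₀ : 0 < c₀)
    (hcramer : ∀ e, ∀ c : ℝ, |c| < c₀ → Integrable (fun ω => Real.exp (c * X e ω)) P)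
    (ε δ : ℝ) (hε : 0 < ε) (hε1 : ε < 1) (hδ : 0 < δ) (hδ1 : δ < 1) :
    ∃ c'' > (0 : ℝ), ∃ c₁' > (0 : ℝ), ∀ c₁ : ℝ, 0 < c₁ → c₁ ≤ c₁' →
      ∃ n₀ l₀ : ℕ, ∀ n : ℕ, n₀ ≤ n → ∀ l : ℕ, l₀ ≤ l → ∀ k : ℕ,
        (P (Aevent X ε δ c₁ n l k)).toReal ≤ Real.exp (-(c'' * ε * (1 - δ) * n)) := by
  classical
  set t : ℝ := c₀ / 2 with htdef
  have ht : 0 < t := by positivity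
  set e₀ : ℤ × ℕ × Bool := (0, 0, false) with he₀
  set M : ℝ := ∫ ω, Real.exp (-t * X e₀ ω) ∂P with hM
  have hint : ∀ e, Integrable (fun ω => Real.exp (-t * X e ω)) P := by
    intro e
    apply hcramer e (-t)
    rw [abs_neg, abs_of_pos ht]
    simp only [htdef]; linarith
  have hMeq : ∀ e, ∫ ω, Real.exp (-t * X e ω) ∂P = M :=
    fun e => integral_exp_eq (X e) (X e₀) (hmeas e) (hmeas e₀) (hident e e₀) t
  have hXi : Integrable (X e₀) P := by
    apply Xint' (X e₀) (hmeas e₀) c₀ hc₀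
    · apply hcramer e₀ (c₀/2); rw [abs_of_pos (by positivity)]; linarith
    · apply hcramer e₀ (-(c₀/2)); rw [abs_neg, abs_of_pos (by positivity)]; linarith
  have hM1 : 1 ≤ M := M_ge_one (X e₀) t hXi (hmean e₀) (hint e₀)
  have hlogM : 0 ≤ Real.log M := Real.log_nonneg hM1
  set u : ℝ := c₀ * ε * (1 - δ) / 80 with hu
  have hu0 : 0 < u := by
    have : 0 < 1 - δ := by linarith
    positivity
  refine ⟨c₀ / 80, by positivity, u / (1 + Real.log M), by positivity, ?_⟩
  intro c₁ hc₁0 hc₁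
  refine ⟨1, max 2 (⌈Real.log 2 / u⌉₊ + 1), ?_⟩
  intro n hn l hl k
  have hl2 : 2 ≤ l := le_trans (le_max_left _ _) hl
  have hlog2l : Real.log 2 < u * l := by
    have h1 : (⌈Real.log 2 / u⌉₊ + 1 : ℕ) ≤ l := le_trans (le_max_right _ _) hl
    have h2 : Real.log 2 / u < (l : ℝ) := by
      have := Nat.le_ceil (Real.log 2 / u)
      have hcast : ((⌈Real.log 2 / u⌉₊ + 1 : ℕ) : ℝ) ≤ (l : ℝ) := by exact_mod_cast h1
      push_cast at hcast
      linarith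
    calc Real.log 2 = (Real.log 2 / u) * u := by field_simp
      _ < (l : ℝ) * u := by apply mul_lt_mul_of_pos_right h2 hu0
      _ = u * l := by ring
  set N : ℕ := ⌊(1 - δ) * (n : ℝ) / l⌋₊ with hN
  set a : ℝ := (ε / 10) * ((1 - δ) * n) with ha
  set 𝒮 : Finset (Finset ℕ) := (Finset.Icc 1 N).powerset.filter
    (fun J => (J.card : ℝ) ≤ c₁ * n / l) with h𝒮
  set B : Finset ℕ → Set Ω := fun J =>
    {ω | ∑ j ∈ J, Stmt8.Ykj (fun e => X e ω) δ n l k j ≤ -a} with hB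
  have hsub : Stmt8.Aevent X ε δ c₁ n l k ⊆ ⋃ J ∈ 𝒮, B J := by
    intro ω hω
    obtain ⟨J, hJ1, hJ2, hJ3⟩ := hω
    refine Set.mem_iUnion₂.mpr ⟨J, Finset.mem_filter.mpr ⟨Finset.mem_powerset.mpr hJ1, hJ2⟩, ?_⟩
    · simp only [hB, Set.mem_setOf_eq, ha]
      calc ∑ j ∈ J, Stmt8.Ykj (fun e => X e ω) δ n l k j
          ≤ -(ε / 10) * ((1 - δ) * n) := hJ3
        _ = -((ε / 10) * ((1 - δ) * n)) := by ring
  -- per-J bound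
  have hlM : (1 : ℝ) ≤ (l : ℝ) * M ^ l := by
    have h1 : (1 : ℝ) ≤ M ^ l := one_le_pow₀ hM1
    have h2 : (1 : ℝ) ≤ (l : ℝ) := by exact_mod_cast le_trans (by norm_num) hl2
    nlinarith
  set r : ℝ := c₁ * n / l with hr
  have hr0 : 0 ≤ r := by positivity
  set C : ℝ := Real.exp (-(t * a)) * ((l : ℝ) * M ^ l) ^ r with hC
  have hC0 : 0 ≤ C := by positivity
  have hperJ : ∀ J ∈ 𝒮, (P (B J)).toReal ≤ C := by
    intro J hJ
    obtain ⟨hJ1, hJ2⟩ := Finset.mem_filter.mp hJ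
    have := chernoff_block X hmeas hindep t M ht hM1 hint hMeq δ n l k N hl2 J
      (Finset.mem_powerset.mp hJ1) a
    refine this.trans ?_
    rw [hC]
    apply mul_le_mul_of_nonneg_left _ (Real.exp_pos _).le
    calc ((l : ℝ) * M ^ l) ^ J.card = ((l : ℝ) * M ^ l) ^ (J.card : ℝ) :=
          (Real.rpow_natCast _ _).symm
      _ ≤ ((l : ℝ) * M ^ l) ^ r := Real.rpow_le_rpow_of_exponent_le hlM hJ2
  -- union bound
  have hPA : (P (Stmt8.Aevent X ε δ c₁ n l k)).toReal ≤ (𝒮.card : ℝ) * C := by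
    have h1 : P (Stmt8.Aevent X ε δ c₁ n l k) ≤ ∑ J ∈ 𝒮, P (B J) :=
      (measure_mono hsub).trans (measure_biUnion_finset_le 𝒮 B)
    have h2 : (P (Stmt8.Aevent X ε δ c₁ n l k)).toReal ≤ (∑ J ∈ 𝒮, P (B J)).toReal :=
      ENNReal.toReal_mono (by
        refine (ENNReal.sum_lt_top.mpr fun J _ => ?_).ne
        exact measure_lt_top P _) h1
    rw [ENNReal.toReal_sum (fun J _ => measure_ne_top P _)] at h2
    refine h2.trans ?_
    calc ∑ J ∈ 𝒮, (P (B J)).toReal ≤ ∑ _J ∈ 𝒮, C := Finset.sum_le_sum hperJ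
      _ = (𝒮.card : ℝ) * C := by rw [Finset.sum_const, nsmul_eq_mul]
  have hcard : (𝒮.card : ℝ) ≤ (2 : ℝ) ^ N := by
    have h1 : 𝒮.card ≤ (Finset.Icc 1 N).powerset.card := Finset.card_filter_le _ _
    rw [Finset.card_powerset, Nat.card_Icc] at h1
    have : 𝒮.card ≤ 2 ^ N := by simpa using h1
    calc (𝒮.card : ℝ) ≤ ((2 ^ N : ℕ) : ℝ) := by exact_mod_cast this
      _ = (2 : ℝ) ^ N := by push_cast; ring
  -- final numeric bound
  have hfinal : (2 : ℝ) ^ N * C ≤ Real.exp (-(c₀ / 80 * ε * (1 - δ) * n)) := by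
    have hl0 : (0 : ℝ) < l := by exact_mod_cast lt_of_lt_of_le (by norm_num) hl2
    have hn1 : (1 : ℝ) ≤ n := by exact_mod_cast hn
    have hδ' : (0 : ℝ) ≤ 1 - δ := by linarith
    have h2N : (2 : ℝ) ^ N = Real.exp (N * Real.log 2) := by
      rw [← Real.log_pow, Real.exp_log (by positivity)]
    have hrpow : ((l : ℝ) * M ^ l) ^ r = Real.exp (Real.log ((l : ℝ) * M ^ l) * r) := by
      rw [Real.rpow_def_of_pos (by positivity)]
    rw [hC, h2N, hrpow, ← Real.exp_add, ← Real.exp_add]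
    apply Real.exp_le_exp.mpr
    have hta : t * a = 4 * u * n := by rw [htdef, ha, hu]; ring
    have hcu : c₀ / 80 * ε * (1 - δ) * (n : ℝ) = u * n := by rw [hu]; ring
    have hNlog : (N : ℝ) * Real.log 2 ≤ u * n := by
      have hNle : (N : ℝ) ≤ (1 - δ) * n / l := Nat.floor_le (by positivity)
      have hNle2 : (N : ℝ) ≤ n / l := by
        refine hNle.trans ((div_le_div_iff_of_pos_right hl0).mpr (by nlinarith))
      have h3 : (N : ℝ) * Real.log 2 ≤ (n / l) * Real.log 2 :=
        mul_le_mul_of_nonneg_right hNle2 (Real.log_nonneg one_le_two)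
      refine h3.trans ?_
      rw [div_mul_eq_mul_div, div_le_iff₀ hl0]
      calc (n : ℝ) * Real.log 2 ≤ (n : ℝ) * (u * l) :=
            mul_le_mul_of_nonneg_left hlog2l.le (by positivity)
        _ = u * n * l := by ring
    have hrlog : Real.log ((l : ℝ) * M ^ l) * r ≤ u * n := by
      have hM0 : (0 : ℝ) < M := by linarith
      have hlog_eq : Real.log ((l : ℝ) * M ^ l) = Real.log l + l * Real.log M := by
        rw [Real.log_mul (by positivity) (by positivity), Real.log_pow]
      have hlogl : Real.log l ≤ l := (Real.log_le_sub_one_of_pos hl0).trans (by linarith)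
      have h1 : Real.log ((l : ℝ) * M ^ l) ≤ (l : ℝ) * (1 + Real.log M) := by
        rw [hlog_eq, mul_add, mul_one]; linarith
      have h2 : Real.log ((l : ℝ) * M ^ l) * r ≤ ((l : ℝ) * (1 + Real.log M)) * r :=
        mul_le_mul_of_nonneg_right h1 hr0
      refine h2.trans ?_
      have hpos1 : (0 : ℝ) < 1 + Real.log M := by linarith
      have hc1u : c₁ * (1 + Real.log M) ≤ u := by
        rw [← le_div_iff₀ hpos1]; exact hc₁
      have h4 : ((l : ℝ) * (1 + Real.log M)) * r = c₁ * (1 + Real.log M) * n := by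
        rw [hr]; field_simp
      rw [h4]
      exact mul_le_mul_of_nonneg_right hc1u (by positivity)
    have hun : 0 ≤ u * (n : ℝ) := by positivity
    linarith
  calc (P (Stmt8.Aevent X ε δ c₁ n l k)).toReal ≤ (𝒮.card : ℝ) * C := hPA
    _ ≤ (2 : ℝ) ^ N * C := mul_le_mul_of_nonneg_right hcard hC0
    _ ≤ Real.exp (-(c₀ / 80 * ε * (1 - δ) * n)) := hfinal
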